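/- Let A and B be linear endomorphisms of finite-dimensional vector spaces V and W, respectively, over a field F, and suppose the minimal polynomials of A and B are coprime. If X : V → W is a linear map satisfying X ∘ A = B ∘ X, then X = 0. -/

import Mathlib

theorem intertwine_aeval
    {F V W : Type*} [Field F]
    [AddCommGroup V] [Module F V]
    [AddCommGroup W] [Module F W]
    (A : Module.End F V) (B : Module.End F W)
    (X : V →ₗ[F] W) (hX : X ∘ₗ A = B ∘ₗ X) (p : Polynomial F) :
    X ∘ₗ (Polynomial.aeval A p) = (Polynomial.aeval B p) ∘ₗ X := by
  induction p using Polynomial.induction_on with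
  | C a => ext v; simp [Module.algebraMap_end_apply]
  | add p q hp hq =>
      simp only [map_add, LinearMap.add_comp, LinearMap.comp_add, hp, hq]
  | monomial n a h =>
      simp only [pow_succ, map_mul, Polynomial.aeval_X, Polynomial.aeval_X_pow,
        ← mul_assoc, Module.End.mul_eq_comp] at h ⊢
      rw [← LinearMap.comp_assoc, h, LinearMap.comp_assoc, LinearMap.comp_assoc, hX,
        ← LinearMap.comp_assoc, ← LinearMap.comp_assoc]

/-- If the minimal polynomials of `A` and `B` are coprime, then the only
linear map `X : V → W` with `X ∘ A = B ∘ X` is `X = 0`. -/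
theorem intertwiner_eq_zero_of_coprime_minpoly
    {F V W : Type*} [Field F]
    [AddCommGroup V] [Module F V] [FiniteDimensional F V]
    [AddCommGroup W] [Module F W] [FiniteDimensional F W]
    (A : Module.End F V) (B : Module.End F W)
    (hcop : IsCoprime (minpoly F A) (minpoly F B))
    (X : V →ₗ[F] W) (hX : X ∘ₗ A = B ∘ₗ X) :
    X = 0 := by
  obtain ⟨u, v, huv⟩ := hcop
  have h1 : Polynomial.aeval A (v * minpoly F B) = 1 := by
    have := congrArg (Polynomial.aeval A) huv
    simpa [minpoly.aeval] using this
  have h2 : Polynomial.aeval B (v * minpoly F B) = 0 := by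
    simp [map_mul, minpoly.aeval]
  have key := intertwine_aeval A B X hX (v * minpoly F B)
  rw [h1, h2] at key
  simpa [Module.End.one_eq_id] using key
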